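/- Fix integers r ≥ 1 and d ≥ 1, and let F_{d,h} : [0,1] → [0,1] be defined by F_{d,0}(x) = x and F_{d,h}(x) = 1 − ∫_x^1 (1 − (1 − F_{d,h−1}(t))^r)^d dt for h ≥ 1. Then there exist functions F_{d,even}, F_{d,odd} : [0,1] → [0,1] such that F_{d,2k}(x) → F_{d,even}(x) and F_{d,2k+1}(x) → F_{d,odd}(x) pointwise as k → ∞, and F_{d,even}(x) ≤ F_{d,odd}(x) for all x ∈ [0,1]. -/

import Mathlib

open Set Filter

/-- The functions `F_{d,h}` defined by `F_{d,0}(x) = x` and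
`F_{d,h}(x) = 1 - ∫_x^1 (1-(1-F_{d,h-1}(t))^r)^d dt`. -/
noncomputable def Fseq (r d : ℕ) : ℕ → ℝ → ℝ
  | 0 => fun x => x
  | h + 1 => fun x => 1 - ∫ t in x..(1 : ℝ), (1 - (1 - Fseq r d h t) ^ r) ^ d

namespace FseqAux

variable (r d : ℕ)

lemma phi_mem {y : ℝ} (hy : y ∈ Icc (0:ℝ) 1) :
    (1 - (1 - y) ^ r) ^ d ∈ Icc (0:ℝ) 1 := by
  obtain ⟨h0, h1⟩ := hy
  have hy0 : (0:ℝ) ≤ 1 - y := by linarith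
  have h2 : (1 - y) ^ r ≤ 1 := pow_le_one₀ hy0 (by linarith)
  have h3 : (0:ℝ) ≤ (1 - y) ^ r := pow_nonneg hy0 r
  exact ⟨pow_nonneg (by linarith) d, pow_le_one₀ (by linarith) (by linarith)⟩

lemma phi_mono {a b : ℝ} (ha : 0 ≤ a) (hab : a ≤ b) (hb : b ≤ 1) :
    (1 - (1 - a) ^ r) ^ d ≤ (1 - (1 - b) ^ r) ^ d := by
  have h1 : (0:ℝ) ≤ 1 - b := by linarith
  have h2 : (1 - b) ^ r ≤ (1 - a) ^ r := pow_le_pow_left₀ h1 (by linarith) r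
  have h3 : (1 - a) ^ r ≤ 1 := pow_le_one₀ (by linarith) (by linarith)
  exact pow_le_pow_left₀ (by linarith) (by linarith) d

lemma cont : ∀ h, Continuous (Fseq r d h) := by
  intro h
  induction h with
  | zero => exact continuous_id
  | succ h ih =>
    have hg : Continuous fun t => (1 - (1 - Fseq r d h t) ^ r) ^ d := by
      fun_prop
    have hint : ∀ a b : ℝ,
        IntervalIntegrable (fun t => (1 - (1 - Fseq r d h t) ^ r) ^ d)
          MeasureTheory.volume a b := fun a b => hg.intervalIntegrable a b
    have hc : Continuous fun x : ℝ =>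
        ∫ t in (1:ℝ)..x, (1 - (1 - Fseq r d h t) ^ r) ^ d :=
      intervalIntegral.continuous_primitive hint 1
    have : (Fseq r d (h+1)) = fun x =>
        1 + ∫ t in (1:ℝ)..x, (1 - (1 - Fseq r d h t) ^ r) ^ d := by
      funext x
      show (1 - ∫ t in x..(1:ℝ), (1 - (1 - Fseq r d h t) ^ r) ^ d) = _
      rw [intervalIntegral.integral_symm]
      ring
    rw [this]
    exact continuous_const.add hc

lemma integrable (h : ℕ) (a b : ℝ) :
    IntervalIntegrable (fun t => (1 - (1 - Fseq r d h t) ^ r) ^ d)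
      MeasureTheory.volume a b := by
  have hg : Continuous fun t => (1 - (1 - Fseq r d h t) ^ r) ^ d := by
    have := cont r d h; fun_prop
  exact hg.intervalIntegrable a b

lemma mem : ∀ h, ∀ x ∈ Icc (0:ℝ) 1, Fseq r d h x ∈ Icc x 1 := by
  intro h
  induction h with
  | zero => intro x hx; exact ⟨le_refl x, hx.2⟩
  | succ h ih =>
    intro x hx
    have hx1 : x ≤ 1 := hx.2
    have hmem : ∀ t ∈ Icc x 1, (1 - (1 - Fseq r d h t) ^ r) ^ d ∈ Icc (0:ℝ) 1 := by
      intro t ht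
      have ht01 : t ∈ Icc (0:ℝ) 1 := ⟨le_trans hx.1 ht.1, ht.2⟩
      have := ih t ht01
      exact phi_mem r d ⟨le_trans ht01.1 this.1, this.2⟩
    have h0 : 0 ≤ ∫ t in x..(1:ℝ), (1 - (1 - Fseq r d h t) ^ r) ^ d :=
      intervalIntegral.integral_nonneg hx1 (fun t ht => (hmem t ht).1)
    have h1 : (∫ t in x..(1:ℝ), (1 - (1 - Fseq r d h t) ^ r) ^ d) ≤
        ∫ _t in x..(1:ℝ), (1:ℝ) := by
      apply intervalIntegral.integral_mono_on hx1 (integrable r d h x 1)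
        (intervalIntegrable_const)
      exact fun t ht => (hmem t ht).2
    rw [intervalIntegral.integral_const, smul_eq_mul, mul_one] at h1
    constructor
    · show x ≤ 1 - _; linarith
    · show 1 - _ ≤ 1; linarith

lemma step (a b : ℕ) (hab : ∀ t ∈ Icc (0:ℝ) 1, Fseq r d a t ≤ Fseq r d b t)
    {x : ℝ} (hx : x ∈ Icc (0:ℝ) 1) : Fseq r d (b+1) x ≤ Fseq r d (a+1) x := by
  have hx1 : x ≤ 1 := hx.2
  have hmono : (∫ t in x..(1:ℝ), (1 - (1 - Fseq r d a t) ^ r) ^ d) ≤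
      ∫ t in x..(1:ℝ), (1 - (1 - Fseq r d b t) ^ r) ^ d := by
    apply intervalIntegral.integral_mono_on hx1 (integrable r d a x 1)
      (integrable r d b x 1)
    intro t ht
    have ht01 : t ∈ Icc (0:ℝ) 1 := ⟨le_trans hx.1 ht.1, ht.2⟩
    have hma := mem r d a t ht01
    have hmb := mem r d b t ht01
    exact phi_mono r d (le_trans ht01.1 hma.1) (hab t ht01) hmb.2
  show 1 - _ ≤ 1 - _
  linarith

lemma even_le_odd : ∀ k, ∀ x ∈ Icc (0:ℝ) 1,
    Fseq r d (2 * k) x ≤ Fseq r d (2 * k + 1) x := by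
  intro k
  induction k with
  | zero =>
    intro x hx
    simpa using (show Fseq r d 0 x ≤ Fseq r d 1 x from (mem r d 1 x hx).1)
  | succ k ih =>
    intro x hx
    have h1 : ∀ t ∈ Icc (0:ℝ) 1, Fseq r d (2*k+2) t ≤ Fseq r d (2*k+1) t :=
      fun t ht => step r d (2*k) (2*k+1) ih ht
    have h2 := step r d (2*k+2) (2*k+1) h1 hx
    have e1 : 2 * (k+1) = 2*k+1+1 := by omega
    have e2 : 2 * (k+1) + 1 = 2*k+2+1 := by omega
    rw [e1]
    exact h2

lemma even_mono_odd_anti : ∀ k, (∀ x ∈ Icc (0:ℝ) 1,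
    Fseq r d (2 * k) x ≤ Fseq r d (2 * (k+1)) x) ∧
    (∀ x ∈ Icc (0:ℝ) 1, Fseq r d (2 * (k+1) + 1) x ≤ Fseq r d (2 * k + 1) x) := by
  intro k
  induction k with
  | zero =>
    have h1 : ∀ x ∈ Icc (0:ℝ) 1, Fseq r d 0 x ≤ Fseq r d 2 x := by
      intro x hx; exact (mem r d 2 x hx).1
    have h2 : ∀ x ∈ Icc (0:ℝ) 1, Fseq r d 3 x ≤ Fseq r d 1 x :=
      fun x hx => step r d 0 2 h1 hx
    constructor
    · intro x hx; simpa using h1 x hx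
    · intro x hx; simpa using h2 x hx
  | succ k ih =>
    have h1 : ∀ x ∈ Icc (0:ℝ) 1, Fseq r d (2*k+1+1) x ≤ Fseq r d (2*(k+1)+1+1) x := by
      intro x hx
      exact step r d (2*(k+1)+1) (2*k+1) ih.2 hx
    have h1' : ∀ x ∈ Icc (0:ℝ) 1, Fseq r d (2*(k+1)) x ≤ Fseq r d (2*(k+2)) x := by
      intro x hx
      have := h1 x hx
      have e1 : 2*(k+1) = 2*k+1+1 := by ring
      have e2 : 2*(k+2) = 2*(k+1)+1+1 := by ring
      rw [e1, e2]; exact this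
    have h2 : ∀ x ∈ Icc (0:ℝ) 1, Fseq r d (2*(k+2)+1) x ≤ Fseq r d (2*(k+1)+1) x := by
      intro x hx
      have := step r d (2*(k+1)) (2*(k+2)) h1' hx
      have e1 : 2*(k+2)+1 = 2*(k+2)+1 := rfl
      exact this
    exact ⟨h1', h2⟩

end FseqAux

theorem Fseq_even_odd_limits (r d : ℕ) (hr : 1 ≤ r) (hd : 1 ≤ d) :
    ∃ Feven Fodd : ℝ → ℝ, ∀ x ∈ Set.Icc (0 : ℝ) 1,
      Feven x ∈ Set.Icc (0 : ℝ) 1 ∧ Fodd x ∈ Set.Icc (0 : ℝ) 1 ∧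
      Filter.Tendsto (fun k : ℕ => Fseq r d (2 * k) x) Filter.atTop (nhds (Feven x)) ∧
      Filter.Tendsto (fun k : ℕ => Fseq r d (2 * k + 1) x) Filter.atTop (nhds (Fodd x)) ∧
      Feven x ≤ Fodd x := by
  classical
  refine ⟨fun x => ⨆ k : ℕ, Fseq r d (2 * k) x,
          fun x => ⨅ k : ℕ, Fseq r d (2 * k + 1) x, ?_⟩
  intro x hx
  set u : ℕ → ℝ := fun k => Fseq r d (2 * k) x with hu
  set v : ℕ → ℝ := fun k => Fseq r d (2 * k + 1) x with hv
  have humono : Monotone u :=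
    monotone_nat_of_le_succ fun k => (FseqAux.even_mono_odd_anti r d k).1 x hx
  have hvanti : Antitone v :=
    antitone_nat_of_succ_le fun k => (FseqAux.even_mono_odd_anti r d k).2 x hx
  have huv : ∀ k, u k ≤ v k := fun k => FseqAux.even_le_odd r d k x hx
  have hu01 : ∀ k, u k ∈ Set.Icc (0:ℝ) 1 := by
    intro k
    have := FseqAux.mem r d (2*k) x hx
    exact ⟨le_trans hx.1 this.1, this.2⟩
  have hv01 : ∀ k, v k ∈ Set.Icc (0:ℝ) 1 := by
    intro k
    have := FseqAux.mem r d (2*k+1) x hx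
    exact ⟨le_trans hx.1 this.1, this.2⟩
  have hubdd : BddAbove (Set.range u) := ⟨1, by rintro _ ⟨k, rfl⟩; exact (hu01 k).2⟩
  have hvbdd : BddBelow (Set.range v) := ⟨0, by rintro _ ⟨k, rfl⟩; exact (hv01 k).1⟩
  have htu : Filter.Tendsto u Filter.atTop (nhds (⨆ k, u k)) :=
    tendsto_atTop_ciSup humono hubdd
  have htv : Filter.Tendsto v Filter.atTop (nhds (⨅ k, v k)) :=
    tendsto_atTop_ciInf hvanti hvbdd
  have hle : (⨆ k, u k) ≤ ⨅ k, v k := by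
    apply le_ciInf
    intro j
    apply ciSup_le
    intro k
    calc u k ≤ u (max k j) := humono (le_max_left k j)
      _ ≤ v (max k j) := huv _
      _ ≤ v j := hvanti (le_max_right k j)
  refine ⟨?_, ?_, htu, htv, hle⟩
  · constructor
    · exact le_trans (hu01 0).1 (le_ciSup hubdd 0)
    · exact ciSup_le fun k => (hu01 k).2
  · constructor
    · exact le_ciInf fun k => (hv01 k).1
    · exact le_trans (ciInf_le hvbdd 0) (hv01 0).2
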